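/- Under the assumptions of the previous representation lemma, with E^a symmetric positive definite and K^a symmetric positive definite, one has ‖αe + βê‖_{M^a} ≤ ‖P D^a[α(J y^{ac} + y^{bc} − a^a) + β J g^{ac}]‖_{E^a} for all α, β ∈ ℝ, where ‖v‖_M := (v^T M v)^{1/2}. -/

import Mathlib

open Matrix
open scoped MatrixOrder

lemma sqrt_dot_aux (m : ℕ) (A : Matrix (Fin m) (Fin m) ℝ) (hA : A.PosSemidef)
    (x y : Fin m → ℝ) :
    x ⬝ᵥ A.mulVec y = ((CFC.sqrt A).mulVec x) ⬝ᵥ ((CFC.sqrt A).mulVec y) := by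
  conv_lhs => rw [← CFC.sqrt_mul_sqrt_self A hA.nonneg]
  rw [← mulVec_mulVec, dotProduct_mulVec, ← mulVec_transpose,
    show (CFC.sqrt A)ᵀ = CFC.sqrt A from by
      have h := (nonneg_iff_posSemidef.mp (CFC.sqrt_nonneg A)).1
      unfold IsHermitian at h; rwa [conjTranspose_eq_transpose_of_trivial] at h]

lemma dot_cauchy (m : ℕ) (u w : Fin m → ℝ) :
    u ⬝ᵥ w ≤ Real.sqrt (u ⬝ᵥ u) * Real.sqrt (w ⬝ᵥ w) := by
  have := Real.sum_mul_le_sqrt_mul_sqrt Finset.univ u w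
  simpa [dotProduct, sq] using this

lemma dotT {p q : ℕ} (A : Matrix (Fin q) (Fin p) ℝ) (x : Fin p → ℝ) (y : Fin q → ℝ) :
    x ⬝ᵥ Aᵀ.mulVec y = (A.mulVec x) ⬝ᵥ y := by
  rw [dotProduct_mulVec, vecMul_transpose]

/-- Under the assumptions of the representation lemma, with `Eᵃ` and `Kᵃ` symmetric
positive definite, `‖αe + βê‖_{Mᵃ} ≤ ‖PD[α(Jyᵃᶜ + y^{bc} − aᵃ) + βJgᵃᶜ]‖_{Eᵃ}`. -/
theorem stmt_11 (n₀ n m : ℕ)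
    (J : Matrix (Fin n) (Fin n₀) ℝ) (D : Matrix (Fin m) (Fin n) ℝ)
    (Ea Eac : Matrix (Fin m) (Fin m) ℝ) (K : Matrix (Fin n) (Fin n) ℝ)
    (hEaPD : Ea.PosDef) (hKPD : K.PosDef)
    (aa ba ybc : Fin n → ℝ) (q : Fin n₀ → ℝ)
    (Ma Mac : Matrix (Fin n₀) (Fin n₀) ℝ) (P : Matrix (Fin m) (Fin m) ℝ)
    (hMa : Ma = Jᵀ * (Dᵀ * Ea * D + K) * J)
    (hMac : Mac = Jᵀ * (Dᵀ * Eac * D + K) * J)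
    (hP : P = 1 - Ea⁻¹ * Eac)
    (fa fac : Fin n₀ → ℝ)
    (hfa : fa = -((Jᵀ * Dᵀ * Ea * D).mulVec (ybc - aa)) - (Jᵀ * K).mulVec (ybc - ba))
    (hfac : fac = -((Jᵀ * Dᵀ * Eac * D).mulVec (ybc - aa)) - (Jᵀ * K).mulVec (ybc - ba))
    (ya yac ga gac : Fin n₀ → ℝ)
    (hya : Ma.mulVec ya = fa) (hyac : Mac.mulVec yac = fac)
    (hga : Ma.mulVec ga = q) (hgac : Mac.mulVec gac = q)
    (α β : ℝ) :
    Real.sqrt ((α • (ya - yac) + β • (ga - gac)) ⬝ᵥ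
        Ma.mulVec (α • (ya - yac) + β • (ga - gac))) ≤
      Real.sqrt ((P.mulVec (D.mulVec (α • (J.mulVec yac + ybc - aa) + β • J.mulVec gac)))
        ⬝ᵥ Ea.mulVec
          (P.mulVec (D.mulVec (α • (J.mulVec yac + ybc - aa) + β • J.mulVec gac)))) := by
  set v := α • (ya - yac) + β • (ga - gac) with hv
  set z := α • (J.mulVec yac + ybc - aa) + β • J.mulVec gac with hz
  set w := P.mulVec (D.mulVec z) with hw
  set N := Jᵀ * Dᵀ * (Ea - Eac) * D with hN
  have hdet : IsUnit Ea.det := isUnit_iff_ne_zero.mpr (ne_of_gt hEaPD.det_pos)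
  have hMdiff : Ma = Mac + N * J := by
    rw [hMa, hMac, hN]
    simp only [Matrix.mul_sub, Matrix.sub_mul, Matrix.mul_add, Matrix.add_mul,
      Matrix.mul_assoc]
    abel
  have hfdiff : fa = fac - N.mulVec (ybc - aa) := by
    rw [hfa, hfac, hN]
    simp only [Matrix.mul_sub, Matrix.sub_mul, Matrix.mul_assoc, sub_mulVec]
    abel
  -- representation: Ma v = - N z
  have hMav : Ma.mulVec v = -(N.mulVec z) := by
    have hMyac : Ma.mulVec yac = fac + N.mulVec (J.mulVec yac) := by
      rw [hMdiff, add_mulVec, hyac, ← mulVec_mulVec]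
    have h1 : Ma.mulVec (ya - yac) = -(N.mulVec (J.mulVec yac + ybc - aa)) := by
      rw [mulVec_sub, hya, hfdiff, hMyac,
        show J.mulVec yac + ybc - aa = J.mulVec yac + (ybc - aa) from by abel,
        mulVec_add]
      abel
    have h2 : Ma.mulVec (ga - gac) = -(N.mulVec (J.mulVec gac)) := by
      have : Ma.mulVec gac = q + (N * J).mulVec gac := by
        rw [hMdiff, add_mulVec, hgac]
      rw [mulVec_sub, hga, this, ← mulVec_mulVec]
      abel
    rw [hv, hz, mulVec_add, mulVec_smul, mulVec_smul, h1, h2, mulVec_add,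
      mulVec_smul, mulVec_smul]
    module
  have hEaw : Ea.mulVec w = (Ea - Eac).mulVec (D.mulVec z) := by
    rw [hw, mulVec_mulVec, hP, Matrix.mul_sub, Matrix.mul_one, ← Matrix.mul_assoc,
      Matrix.mul_nonsing_inv _ hdet, Matrix.one_mul]
  set u := D.mulVec (J.mulVec v) with hu
  have key : v ⬝ᵥ Ma.mulVec v = -(u ⬝ᵥ Ea.mulVec w) := by
    rw [hMav, dotProduct_neg, hEaw, hN, ← mulVec_mulVec, ← mulVec_mulVec,
      ← mulVec_mulVec, dotT, dotT, hu]
  have split : v ⬝ᵥ Ma.mulVec v =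
      u ⬝ᵥ Ea.mulVec u + (J.mulVec v) ⬝ᵥ K.mulVec (J.mulVec v) := by
    rw [hMa, Matrix.mul_assoc, ← mulVec_mulVec, dotT, ← mulVec_mulVec, add_mulVec,
      dotProduct_add, Matrix.mul_assoc, ← mulVec_mulVec, ← mulVec_mulVec, dotT, hu]
  have hA : 0 ≤ u ⬝ᵥ Ea.mulVec u := by simpa using hEaPD.posSemidef.dotProduct_mulVec_nonneg u
  have hB : 0 ≤ (J.mulVec v) ⬝ᵥ K.mulVec (J.mulVec v) := by simpa using hKPD.posSemidef.dotProduct_mulVec_nonneg (J.mulVec v)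
  have hW : 0 ≤ w ⬝ᵥ Ea.mulVec w := by simpa using hEaPD.posSemidef.dotProduct_mulVec_nonneg w
  have hcs : -(u ⬝ᵥ Ea.mulVec w) ≤
      Real.sqrt (u ⬝ᵥ Ea.mulVec u) * Real.sqrt (w ⬝ᵥ Ea.mulVec w) := by
    set S := CFC.sqrt Ea with hS
    rw [sqrt_dot_aux m Ea hEaPD.posSemidef u w,
      sqrt_dot_aux m Ea hEaPD.posSemidef u u, sqrt_dot_aux m Ea hEaPD.posSemidef w w]
    have := dot_cauchy m (-(S.mulVec u)) (S.mulVec w)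
    simpa [neg_dotProduct] using this
  have hsum : v ⬝ᵥ Ma.mulVec v ≤
      Real.sqrt (v ⬝ᵥ Ma.mulVec v) * Real.sqrt (w ⬝ᵥ Ea.mulVec w) := by
    calc v ⬝ᵥ Ma.mulVec v = -(u ⬝ᵥ Ea.mulVec w) := key
      _ ≤ Real.sqrt (u ⬝ᵥ Ea.mulVec u) * Real.sqrt (w ⬝ᵥ Ea.mulVec w) := hcs
      _ ≤ Real.sqrt (v ⬝ᵥ Ma.mulVec v) * Real.sqrt (w ⬝ᵥ Ea.mulVec w) := by
          apply mul_le_mul_of_nonneg_right _ (Real.sqrt_nonneg _)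
          apply Real.sqrt_le_sqrt
          rw [split]; linarith
  have hvnn : 0 ≤ v ⬝ᵥ Ma.mulVec v := by rw [split]; linarith
  rcases eq_or_lt_of_le hvnn with h0 | hpos
  · rw [← h0, Real.sqrt_zero]; exact Real.sqrt_nonneg _
  · have hs : 0 < Real.sqrt (v ⬝ᵥ Ma.mulVec v) := Real.sqrt_pos.mpr hpos
    have : Real.sqrt (v ⬝ᵥ Ma.mulVec v) * Real.sqrt (v ⬝ᵥ Ma.mulVec v) ≤
        Real.sqrt (v ⬝ᵥ Ma.mulVec v) * Real.sqrt (w ⬝ᵥ Ea.mulVec w) := by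
      rw [Real.mul_self_sqrt hvnn]; exact hsum
    exact le_of_mul_le_mul_left this hs
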